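/- Let (X,G) be a graph with G = H * K, where H and K are subgraphs of G (i.e., G = H ∪ K and E_H, E_K are freely intersecting). Let (Y,H') be a graph and γ : (X,H) → (Y,H') an injective quasi-isometry. Then E_{H'} and E_{(γ×γ)(K)} are freely intersecting, and γ : (X,G) → (Y, H' * (γ×γ)(K)) is also a quasi-isometry, where (γ×γ)(K) = {(γx, γy) : (x,y) ∈ K}. -/

import Mathlib

open Set

/-- A *walk* of length `n` in the (directed presentation of the) edge set `E`. -/
def IsWalk {α : Type*} (E : Set (α × α)) (f : ℕ → α) (n : ℕ) : Prop :=
  ∀ i < n, (f i, f (i + 1)) ∈ E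

/-- Two points are joined by an `E`-path. -/
def Reach {α : Type*} (E : Set (α × α)) (x y : α) : Prop :=
  ∃ (n : ℕ) (f : ℕ → α), f 0 = x ∧ f n = y ∧ IsWalk E f n

/-- The extended path metric `d_E` of a graph, with values in `ℕ∞` (`∞` if no path exists). -/
noncomputable def graphDist {α : Type*} (E : Set (α × α)) (x y : α) : ℕ∞ :=
  sInf {d : ℕ∞ | ∃ (n : ℕ) (f : ℕ → α), d = (n : ℕ∞) ∧ f 0 = x ∧ f n = y ∧ IsWalk E f n}

/-- A graph is *acyclic* if it has no injective cycle (of length at least 3,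
i.e. not doubling back along a single edge). -/
def Acyclic {α : Type*} (E : Set (α × α)) : Prop :=
  ¬ ∃ (f : ℕ → α) (n : ℕ), 3 ≤ n ∧ IsWalk E f n ∧ f n = f 0 ∧
      ∀ i j, i < n → j < n → f i = f j → i = j

/-- `E` is (the directed presentation of) a graph: symmetric and irreflexive. -/
def IsGraph {α : Type*} (E : Set (α × α)) : Prop :=
  (∀ p ∈ E, (p.2, p.1) ∈ E) ∧ ∀ x : α, (x, x) ∉ E

/-- `(α, E)` has uniformly bounded degrees. -/
def BddDeg {α : Type*} (E : Set (α × α)) : Prop :=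
  ∃ d : ℕ, ∀ x : α, {y | (x, y) ∈ E}.encard ≤ (d : ℕ∞)

/-- The `E_G`-class (connected component) of `x`. -/
def cls {α : Type*} (E : Set (α × α)) (x : α) : Set α := {y | Reach E x y}

/-- The complement `C̄ = ω ∖ C` of `C` inside the `E_G`-class(es) of its points. -/
def cCompl {α : Type*} (E : Set (α × α)) (C : Set α) : Set α :=
  {y | y ∉ C ∧ ∃ x ∈ C, Reach E x y}

/-- Inner vertex boundary `∂iv C` of a subset `C` of an `E_G`-class. -/
def innerB {α : Type*} (E : Set (α × α)) (C : Set α) : Set α :=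
  {x | x ∈ C ∧ ∃ y, y ∉ C ∧ (x, y) ∈ E}

/-- Outer vertex boundary `∂ov C = ∂iv C̄` of a subset `C` of an `E_G`-class. -/
def outerB {α : Type*} (E : Set (α × α)) (C : Set α) : Set α :=
  {y | y ∉ C ∧ ∃ x ∈ C, (y, x) ∈ E}

/-- Outer edge boundary `∂oe C = (C × C̄) ∩ E` of a subset `C` of an `E_G`-class. -/
def outerEdgeB {α : Type*} (E : Set (α × α)) (C : Set α) : Set (α × α) :=
  {p | p ∈ E ∧ p.1 ∈ C ∧ p.2 ∉ C}

/-- A *cut* of a graph: a nonempty proper subset of an `E_G`-class with finite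
edge boundary. -/
def IsCut {α : Type*} (E : Set (α × α)) (C : Set α) : Prop :=
  (∃ x₀, x₀ ∈ C ∧ C ⊆ cls E x₀ ∧ C ≠ cls E x₀) ∧ (outerEdgeB E C).Finite

/-- `diam_E(A)`, with values in `ℕ∞`. -/
noncomputable def gdiam {α : Type*} (E : Set (α × α)) (A : Set α) : ℕ∞ :=
  ⨆ x ∈ A, ⨆ y ∈ A, graphDist E x y

/-- `C` and `D` lie on the same `E_G`-class. -/
def SameClass {α : Type*} (E : Set (α × α)) (C D : Set α) : Prop :=
  ∃ x ∈ C, ∃ y ∈ D, Reach E x y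

/-- `C` and `D` are *nested* with each other (complements taken within the class). -/
def NestedPair {α : Type*} (E : Set (α × α)) (C D : Set α) : Prop :=
  C ∩ D = ∅ ∨ C ∩ cCompl E D = ∅ ∨ cCompl E C ∩ D = ∅ ∨ cCompl E C ∩ cCompl E D = ∅
/-- `γ` is a *quasi-isometry* from `(α, E)` to `(β, E')`: bi-Lipschitz up to additive
constants on the extended path metrics (in particular `d_E < ∞ ↔ d_{E'} < ∞`), with
quasi-dense image. -/
def IsQI {α β : Type*} (E : Set (α × α)) (E' : Set (β × β)) (γ : α → β) : Prop :=
  (∃ l c : ℕ, 1 ≤ l ∧ ∀ x₁ x₂ : α,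
      graphDist E' (γ x₁) (γ x₂) ≤ (l : ℕ∞) * graphDist E x₁ x₂ + (c : ℕ∞) ∧
      graphDist E x₁ x₂ ≤ (l : ℕ∞) * graphDist E' (γ x₁) (γ x₂) + (c : ℕ∞)) ∧
  (∃ k : ℕ, ∀ y : β, ∃ x : α, graphDist E' y (γ x) ≤ (k : ℕ∞))
/-- The equivalence relations `E_{G₁}` and `E_{G₂}` are *freely intersecting*: alternating
nontrivial `E_{G₁}`/`E_{G₂}`-steps never return to the start. -/
def FreeProd {α : Type*} (E₁ E₂ : Set (α × α)) : Prop :=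
  ∀ (n : ℕ) (x : ℕ → α), 1 ≤ n →
    (∀ i < n, Reach E₁ (x (2 * i)) (x (2 * i + 1)) ∧ x (2 * i) ≠ x (2 * i + 1)) →
    (∀ i < n, Reach E₂ (x (2 * i + 1)) (x (2 * i + 2)) ∧ x (2 * i + 1) ≠ x (2 * i + 2)) →
    x 0 ≠ x (2 * n)
section FPTHelpers
variable {α : Type*} {E E' : Set (α × α)} {x y z : α}

lemma fpt_graphDist_le {f : ℕ → α} {n : ℕ} (h : IsWalk E f n) :
    graphDist E (f 0) (f n) ≤ (n : ℕ∞) :=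
  sInf_le ⟨n, f, rfl, rfl, rfl, h⟩

lemma fpt_graphDist_le' {f : ℕ → α} {n : ℕ} (h : IsWalk E f n) (h0 : f 0 = x) (hn : f n = y) :
    graphDist E x y ≤ (n : ℕ∞) := by
  subst h0 hn; exact fpt_graphDist_le h

lemma fpt_graphDist_self (E : Set (α × α)) (x : α) : graphDist E x x = 0 := by
  have := fpt_graphDist_le' (E := E) (f := fun _ => x) (n := 0) (by intro i hi; omega) rfl rfl
  simpa using this

lemma fpt_sInf_mem {S : Set ℕ∞} (hS : S.Nonempty) : sInf S ∈ S := by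
  obtain ⟨m, hm, hmin⟩ := wellFounded_lt.has_min S hS
  have : sInf S = m := le_antisymm (sInf_le hm) (le_sInf fun b hb => not_lt.1 (hmin b hb))
  rw [this]; exact hm

lemma fpt_graphDist_spec (h : graphDist E x y ≠ ⊤) :
    ∃ (n : ℕ) (f : ℕ → α), graphDist E x y = (n : ℕ∞) ∧ f 0 = x ∧ f n = y ∧ IsWalk E f n := by
  have hne : {d : ℕ∞ | ∃ (n : ℕ) (f : ℕ → α),
      d = (n : ℕ∞) ∧ f 0 = x ∧ f n = y ∧ IsWalk E f n}.Nonempty := by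
    by_contra hc
    rw [Set.not_nonempty_iff_eq_empty] at hc
    exact h (by rw [graphDist, hc, sInf_empty])
  obtain ⟨n, f, hd, h0, hn, hw⟩ := fpt_sInf_mem hne
  exact ⟨n, f, hd, h0, hn, hw⟩

lemma fpt_reach_iff_dist : Reach E x y ↔ graphDist E x y ≠ ⊤ := by
  constructor
  · rintro ⟨n, f, h0, hn, hw⟩
    exact ne_top_of_le_ne_top (by simp) (fpt_graphDist_le' hw h0 hn)
  · intro h
    obtain ⟨n, f, _, h0, hn, hw⟩ := fpt_graphDist_spec h
    exact ⟨n, f, h0, hn, hw⟩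

lemma fpt_isWalk_concat {f g : ℕ → α} {n m : ℕ} (hf : IsWalk E f n) (hg : IsWalk E g m)
    (hfg : f n = g 0) :
    IsWalk E (fun i => if i ≤ n then f i else g (i - n)) (n + m) := by
  intro i hi
  rcases lt_or_ge i n with h | h
  · simp only [h.le, if_pos, Nat.succ_le_of_lt h]
    exact hf i h
  · have h1 : ¬ (i + 1 ≤ n) := by omega
    simp only [h1, if_neg, if_false]
    by_cases h2 : i ≤ n
    · have : i = n := le_antisymm h2 h
      subst this
      simp only [le_refl, if_pos, hfg]
      have : i + 1 - i = 0 + 1 := by omega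
      rw [this]
      exact hg 0 (by omega)
    · simp only [h2, if_neg]
      have : i + 1 - n = (i - n) + 1 := by omega
      rw [this]
      exact hg (i - n) (by omega)

lemma fpt_graphDist_triangle : graphDist E x z ≤ graphDist E x y + graphDist E y z := by
  by_cases h1 : graphDist E x y = ⊤
  · simp [h1]
  by_cases h2 : graphDist E y z = ⊤
  · simp [h2]
  obtain ⟨n, f, hd1, hf0, hfn, hfw⟩ := fpt_graphDist_spec h1
  obtain ⟨m, g, hd2, hg0, hgm, hgw⟩ := fpt_graphDist_spec h2
  rw [hd1, hd2]
  have hcat := fpt_isWalk_concat hfw hgw (hfn.trans hg0.symm)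
  have h0 : (fun i => if i ≤ n then f i else g (i - n)) 0 = x := by simp [hf0]
  have hnm : (fun i => if i ≤ n then f i else g (i - n)) (n + m) = z := by
    by_cases hm : m = 0
    · subst hm; simpa [hfn, hg0] using hgm
    · have : ¬ (n + m ≤ n) := by omega
      simp only [this, if_neg]
      simpa using hgm
  calc graphDist E x z ≤ ((n + m : ℕ) : ℕ∞) := fpt_graphDist_le' hcat h0 hnm
    _ = (n : ℕ∞) + m := by push_cast; ring

lemma fpt_graphDist_mono (h : E ⊆ E') : graphDist E' x y ≤ graphDist E x y := by
  apply sInf_le_sInf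
  rintro d ⟨n, f, hd, h0, hn, hw⟩
  exact ⟨n, f, hd, h0, hn, fun i hi => h (hw i hi)⟩

lemma fpt_graphDist_le_one (h : (x, y) ∈ E) : graphDist E x y ≤ 1 := by
  have : IsWalk E (fun i => if i = 0 then x else y) 1 := by
    intro i hi
    have : i = 0 := by omega
    subst this; simpa using h
  simpa using fpt_graphDist_le' this (by simp) (by simp)

lemma fpt_reach_extend (h : Reach E x y) (he : (y, z) ∈ E) : Reach E x z := by
  rw [fpt_reach_iff_dist] at h ⊢
  intro hc
  have h3 : graphDist E x y + graphDist E y z = ⊤ := by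
    have := fpt_graphDist_triangle (E := E) (x := x) (y := y) (z := z)
    rw [hc] at this
    exact top_unique this
  have h2 : graphDist E y z ≠ ⊤ := ne_top_of_le_ne_top (by simp) (fpt_graphDist_le_one he)
  rcases WithTop.add_eq_top.1 h3 with h4 | h4
  · exact h h4
  · exact h2 h4

end FPTHelpers

section FPTPull
variable {X Y : Type*} {K : Set (X × X)} {γ : X → Y}

lemma fpt_reach_pullback (hinj : Function.Injective γ) {a b : X}
    (h : Reach (Prod.map γ γ '' K) (γ a) (γ b)) : Reach K a b := by
  obtain ⟨n, f, h0, hn, hw⟩ := h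
  induction n generalizing b with
  | zero =>
    have : a = b := hinj (h0.symm.trans hn)
    subst this
    exact ⟨0, fun _ => a, rfl, rfl, fun i hi => by omega⟩
  | succ n ih =>
    obtain ⟨⟨u, v⟩, huv, heq⟩ := hw n (by omega)
    simp only [Prod.map, Prod.mk.injEq] at heq
    have hv : v = b := hinj (heq.2.trans hn)
    have hrau : Reach K a u := by
      apply ih (b := u) heq.1.symm
      exact fun i hi => hw i (by omega)
    exact fpt_reach_extend hrau (hv ▸ huv)

lemma fpt_reach_mem_range {x y : Y} (h : Reach (Prod.map γ γ '' K) x y) (hxy : x ≠ y) :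
    x ∈ Set.range γ ∧ y ∈ Set.range γ := by
  obtain ⟨n, f, h0, hn, hw⟩ := h
  rcases Nat.eq_zero_or_pos n with h | h
  · subst h; exact absurd (h0.symm.trans hn) hxy
  constructor
  · obtain ⟨⟨u, v⟩, _, heq⟩ := hw 0 h
    exact ⟨u, by rw [← h0]; exact congrArg Prod.fst heq⟩
  · obtain ⟨⟨u, v⟩, _, heq⟩ := hw (n - 1) (by omega)
    have hn1 : n - 1 + 1 = n := by omega
    exact ⟨v, by rw [← hn, ← hn1]; exact congrArg Prod.snd heq⟩

end FPTPull

/-- If `G = H * K` (i.e. `G = H ∪ K` with `E_H`, `E_K` freely intersecting)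
and `γ : (X,H) → (Y,H')` is an injective quasi-isometry, then `E_{H'}` and
`E_{(γ×γ)(K)}` are freely intersecting and `γ : (X,G) → (Y, H' ∪ (γ×γ)(K))` is a
quasi-isometry. -/
theorem free_product_transfer {X Y : Type*} (G H K : Set (X × X)) (H' : Set (Y × Y))
    (hH : IsGraph H) (hK : IsGraph K) (hH' : IsGraph H')
    (hG : G = H ∪ K) (hfree : FreeProd H K)
    (γ : X → Y) (hinj : Function.Injective γ) (hqi : IsQI H H' γ) :
    FreeProd H' (Prod.map γ γ '' K) ∧
    IsQI G (H' ∪ Prod.map γ γ '' K) γ := by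
  classical
  obtain ⟨⟨l, c, hl, hlip⟩, k, hdense⟩ := hqi
  have hHpull : ∀ u v : X, Reach H' (γ u) (γ v) → Reach H u v := by
    intro u v h
    rw [fpt_reach_iff_dist] at h ⊢
    intro hcontra
    have h2 := (hlip u v).2
    rw [hcontra] at h2
    have hne : (l : ℕ∞) * graphDist H' (γ u) (γ v) + (c : ℕ∞) ≠ ⊤ :=
      WithTop.add_ne_top.2 ⟨WithTop.mul_ne_top (WithTop.coe_ne_top) h, WithTop.coe_ne_top⟩
    exact hne (top_unique h2)
  constructor
  · -- freely intersecting
    intro n x hn hx1 hx2 hc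
    have hrange : ∀ j, 1 ≤ j → j ≤ 2 * n → x j ∈ Set.range γ := by
      intro j h1j hj2
      rcases Nat.even_or_odd j with he | ho
      · obtain ⟨i, hi⟩ := he
        have hi' : j = 2 * (i - 1) + 1 + 1 := by omega
        have hilt : i - 1 < n := by omega
        have := fpt_reach_mem_range (hx2 (i - 1) hilt).1 (hx2 (i - 1) hilt).2
        rw [hi']; exact this.2
      · obtain ⟨i, hi⟩ := ho
        have hilt : i < n := by omega
        have := fpt_reach_mem_range (hx2 i hilt).1 (hx2 i hilt).2
        rw [hi]; exact this.1
    have hx0 : x 0 ∈ Set.range γ := by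
      rw [hc]; exact hrange (2 * n) (by omega) le_rfl
    have hrange' : ∀ j, j ≤ 2 * n → x j ∈ Set.range γ := by
      intro j hj
      rcases Nat.eq_zero_or_pos j with h | h
      · rw [h]; exact hx0
      · exact hrange j h hj
    haveI : Nonempty X := ⟨hx0.choose⟩
    set a : ℕ → X := fun j => Function.invFun γ (x j) with ha
    have hkey : ∀ j, j ≤ 2 * n → γ (a j) = x j := fun j hj => Function.invFun_eq (hrange' j hj)
    have h₁ : ∀ i < n, Reach H (a (2 * i)) (a (2 * i + 1)) ∧ a (2 * i) ≠ a (2 * i + 1) := by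
      intro i hi
      have e1 : γ (a (2 * i)) = x (2 * i) := hkey _ (by omega)
      have e2 : γ (a (2 * i + 1)) = x (2 * i + 1) := hkey _ (by omega)
      refine ⟨hHpull _ _ (by rw [e1, e2]; exact (hx1 i hi).1), ?_⟩
      intro hceq
      exact (hx1 i hi).2 (by rw [← e1, ← e2, hceq])
    have h₂ : ∀ i < n, Reach K (a (2 * i + 1)) (a (2 * i + 2)) ∧ a (2 * i + 1) ≠ a (2 * i + 2) := by
      intro i hi
      have e1 : γ (a (2 * i + 1)) = x (2 * i + 1) := hkey _ (by omega)
      have e2 : γ (a (2 * i + 2)) = x (2 * i + 2) := hkey _ (by omega)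
      refine ⟨fpt_reach_pullback hinj (by rw [e1, e2]; exact (hx2 i hi).1), ?_⟩
      intro hceq
      exact (hx2 i hi).2 (by rw [← e1, ← e2, hceq])
    exact hfree n a hn h₁ h₂ (hinj (by rw [hkey 0 (by omega), hkey (2 * n) le_rfl, hc]))
  · set E' := H' ∪ Prod.map γ γ '' K with hE'
    constructor
    · refine ⟨l + c + 1, c, by omega, fun x₁ x₂ => ⟨?_, ?_⟩⟩
      · -- upper bound
        have claim : ∀ (n : ℕ) (f : ℕ → X), IsWalk G f n →
            graphDist E' (γ (f 0)) (γ (f n)) ≤ (((l + c) * n : ℕ) : ℕ∞) := by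
          intro n
          induction n with
          | zero => intro f _; simp [fpt_graphDist_self]
          | succ n ih =>
            intro f hw
            have h1 := ih f (fun i hi => hw i (by omega))
            have hedge : graphDist E' (γ (f n)) (γ (f (n + 1))) ≤ ((l + c : ℕ) : ℕ∞) := by
              have hmem := hw n (by omega)
              rw [hG] at hmem
              rcases hmem with h | h
              · calc graphDist E' (γ (f n)) (γ (f (n + 1)))
                    ≤ graphDist H' (γ (f n)) (γ (f (n + 1))) :=
                      fpt_graphDist_mono Set.subset_union_left
                  _ ≤ (l : ℕ∞) * graphDist H (f n) (f (n + 1)) + c := (hlip _ _).1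
                  _ ≤ (l : ℕ∞) * 1 + c :=
                      add_le_add_left (mul_le_mul_right (fpt_graphDist_le_one h) _) _
                  _ = ((l + c : ℕ) : ℕ∞) := by push_cast; ring
              · have hmem' : (γ (f n), γ (f (n + 1))) ∈ E' :=
                  Or.inr ⟨(f n, f (n + 1)), h, rfl⟩
                calc graphDist E' (γ (f n)) (γ (f (n + 1))) ≤ 1 := fpt_graphDist_le_one hmem'
                  _ ≤ ((l + c : ℕ) : ℕ∞) := by exact_mod_cast (by omega : 1 ≤ l + c)
            calc graphDist E' (γ (f 0)) (γ (f (n + 1)))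
                ≤ graphDist E' (γ (f 0)) (γ (f n)) + graphDist E' (γ (f n)) (γ (f (n + 1))) :=
                  fpt_graphDist_triangle
              _ ≤ (((l + c) * n : ℕ) : ℕ∞) + ((l + c : ℕ) : ℕ∞) := add_le_add h1 hedge
              _ = (((l + c) * (n + 1) : ℕ) : ℕ∞) := by push_cast; ring
        by_cases hfin : graphDist G x₁ x₂ = ⊤
        · rw [hfin, ENat.mul_top (by exact_mod_cast (by omega : l + c + 1 ≠ 0))]
          exact le_top
        · obtain ⟨n, f, hd, h0, hn, hww⟩ := fpt_graphDist_spec hfin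
          rw [hd]
          calc graphDist E' (γ x₁) (γ x₂) = graphDist E' (γ (f 0)) (γ (f n)) := by rw [h0, hn]
            _ ≤ (((l + c) * n : ℕ) : ℕ∞) := claim n f hww
            _ ≤ (((l + c + 1) * n + c : ℕ) : ℕ∞) := by
                exact_mod_cast (by nlinarith : (l + c) * n ≤ (l + c + 1) * n + c)
            _ = ((l + c + 1 : ℕ) : ℕ∞) * n + c := by push_cast; ring
      · -- lower bound
        have claim : ∀ m : ℕ, ∀ (u v : X) (f : ℕ → Y), IsWalk E' f m → f 0 = γ u → f m = γ v →
            graphDist G u v ≤ (((l + c + 1) * m + c : ℕ) : ℕ∞) := by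
          intro m
          induction m using Nat.strong_induction_on with
          | _ m ih =>
            intro u v f hw h0 hm
            by_cases hall : ∀ i < m, (f i, f (i + 1)) ∈ H'
            · have hd' : graphDist H' (γ u) (γ v) ≤ (m : ℕ∞) := fpt_graphDist_le' hall h0 hm
              calc graphDist G u v ≤ graphDist H u v :=
                    fpt_graphDist_mono (hG ▸ Set.subset_union_left)
                _ ≤ (l : ℕ∞) * graphDist H' (γ u) (γ v) + c := (hlip u v).2
                _ ≤ (l : ℕ∞) * m + c := add_le_add_left (mul_le_mul_right hd' _) _
                _ = ((l * m + c : ℕ) : ℕ∞) := by push_cast; ring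
                _ ≤ (((l + c + 1) * m + c : ℕ) : ℕ∞) := by
                    exact_mod_cast (by nlinarith : l * m + c ≤ (l + c + 1) * m + c)
            · push_neg at hall
              have hex : ∃ j, j < m ∧ (f j, f (j + 1)) ∉ H' := hall
              have hj := Nat.find_spec hex
              set j := Nat.find hex with hjdef
              have hpre : ∀ i < j, (f i, f (i + 1)) ∈ H' := by
                intro i hi
                by_contra hcn
                exact Nat.find_min hex hi ⟨by omega, hcn⟩
              have hKmem : (f j, f (j + 1)) ∈ Prod.map γ γ '' K := by
                rcases hw j hj.1 with h | h
                · exact absurd h hj.2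
                · exact h
              obtain ⟨⟨p, q⟩, hpq, heq⟩ := hKmem
              have hfj : f j = γ p := (congrArg Prod.fst heq).symm
              have hfj1 : f (j + 1) = γ q := (congrArg Prod.snd heq).symm
              have hd1 : graphDist G u p ≤ ((l * j + c : ℕ) : ℕ∞) := by
                have hdH' : graphDist H' (γ u) (γ p) ≤ (j : ℕ∞) := fpt_graphDist_le' hpre h0 hfj
                calc graphDist G u p ≤ graphDist H u p :=
                      fpt_graphDist_mono (hG ▸ Set.subset_union_left)
                  _ ≤ (l : ℕ∞) * graphDist H' (γ u) (γ p) + c := (hlip u p).2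
                  _ ≤ (l : ℕ∞) * j + c := add_le_add_left (mul_le_mul_right hdH' _) _
                  _ = ((l * j + c : ℕ) : ℕ∞) := by push_cast; ring
              have hd2 : graphDist G p q ≤ 1 :=
                fpt_graphDist_le_one (show (p, q) ∈ G by rw [hG]; exact Or.inr hpq)
              obtain ⟨m', hm'⟩ : ∃ m', m = j + 1 + m' := ⟨m - j - 1, by omega⟩
              have hd3 : graphDist G q v ≤ (((l + c + 1) * m' + c : ℕ) : ℕ∞) := by
                apply ih m' (by omega) q v (fun i => f (j + 1 + i))
                · intro i hi
                  have e : j + 1 + (i + 1) = (j + 1 + i) + 1 := by omega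
                  simp only [e]
                  exact hw (j + 1 + i) (by omega)
                · simpa using hfj1
                · have e : j + 1 + m' = m := hm'.symm
                  simp only [e]
                  exact hm
              calc graphDist G u v ≤ graphDist G u p + graphDist G p v := fpt_graphDist_triangle
                _ ≤ graphDist G u p + (graphDist G p q + graphDist G q v) :=
                    add_le_add_right fpt_graphDist_triangle _
                _ ≤ ((l * j + c : ℕ) : ℕ∞) + (1 + (((l + c + 1) * m' + c : ℕ) : ℕ∞)) := by
                    exact add_le_add hd1 (add_le_add hd2 hd3)
                _ = ((l * j + c + 1 + ((l + c + 1) * m' + c) : ℕ) : ℕ∞) := by push_cast; ring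
                _ ≤ (((l + c + 1) * m + c : ℕ) : ℕ∞) := by
                    have hnat : l * j + c + 1 + ((l + c + 1) * m' + c) ≤ (l + c + 1) * m + c := by
                      rw [hm']; nlinarith
                    exact_mod_cast hnat
        by_cases hfin : graphDist E' (γ x₁) (γ x₂) = ⊤
        · rw [hfin, ENat.mul_top (by exact_mod_cast (by omega : l + c + 1 ≠ 0))]
          exact le_top
        · obtain ⟨m, f, hd, h0, hm, hww⟩ := fpt_graphDist_spec hfin
          rw [hd]
          calc graphDist G x₁ x₂ ≤ (((l + c + 1) * m + c : ℕ) : ℕ∞) := claim m x₁ x₂ f hww h0 hm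
            _ = ((l + c + 1 : ℕ) : ℕ∞) * m + c := by push_cast; ring
    · refine ⟨k, fun y => ?_⟩
      obtain ⟨x, hx⟩ := hdense y
      exact ⟨x, le_trans (fpt_graphDist_mono Set.subset_union_left) hx⟩
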